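/- Suppose the conflict graph of an even binary (n = 2^m - 3, M = 2^{2^m-m-4}, 4) code C is tripartite with parts D, E, F. Then |D| = |E| = |F| = M, and each of D, E, F is an (n, M, 4) code. -/

import Mathlib

open Finset

namespace S18
variable {N : ℕ}

abbrev B (N : ℕ) := Fin N → ZMod 2

lemma z2ne : ∀ a b : ZMod 2, a ≠ b ↔ b = a + 1 := by decide
lemma z2ne1 : ∀ a : ZMod 2, a ≠ 0 ↔ a = 1 := by decide

lemma eps_cast (x : B N) : ((hammingNorm x : ℕ) : ZMod 2) = ∑ i, x i := by
  rw [hammingNorm]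
  rw [← Finset.sum_filter_ne_zero]
  rw [Finset.sum_congr rfl (fun i hi => ((z2ne1 _).mp (Finset.mem_filter.mp hi).2 : x i = 1))]
  simp

lemma dist_cast (x y : B N) : ((hammingDist x y : ℕ) : ZMod 2) = (∑ i, x i) + ∑ i, y i := by
  rw [hammingDist_eq_hammingNorm, eps_cast]
  have h : ∀ a b : ZMod 2, -a + b = a + b := by decide
  calc ∑ i, (-x + y) i = ∑ i, (x i + y i) := by
        refine Finset.sum_congr rfl fun i _ => ?_
        show -x i + y i = _
        exact h _ _
    _ = _ := Finset.sum_add_distrib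


lemma odd_cast (k : ℕ) : Odd k ↔ ((k : ℕ) : ZMod 2) = 1 := by
  rw [← Nat.not_even_iff_odd, even_iff_two_dvd, ← ZMod.natCast_eq_zero_iff]
  exact z2ne1 _

lemma even_cast (k : ℕ) : Even k ↔ ((k : ℕ) : ZMod 2) = 0 := by
  rw [even_iff_two_dvd, ← ZMod.natCast_eq_zero_iff]

lemma par (x y : B N) : ((hammingDist x y : ℕ) : ZMod 2)
    = ((hammingNorm x : ℕ) : ZMod 2) + ((hammingNorm y : ℕ) : ZMod 2) := by
  rw [dist_cast, eps_cast, eps_cast]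

lemma sphere_card (x : B N) (k : ℕ) :
    ({z : B N | hammingDist x z = k} : Finset (B N)).card = N.choose k := by
  have h : N.choose k = (((Finset.univ : Finset (Fin N))).powersetCard k).card := by
    simp [Finset.card_powersetCard]
  rw [h]
  apply Finset.card_bij' (fun z _ => ({i | x i ≠ z i} : Finset (Fin N)))
    (fun S _ => fun i => if i ∈ S then x i + 1 else x i)
  · intro z hz
    simp only [Finset.mem_filter, Finset.mem_univ, true_and] at hz
    simp only [Finset.mem_powersetCard]
    exact ⟨Finset.subset_univ _, hz⟩
  · intro S hS
    simp only [Finset.mem_powersetCard] at hS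
    simp only [Finset.mem_filter, Finset.mem_univ, true_and, hammingDist]
    rw [← hS.2]
    congr 1
    ext i
    by_cases h : i ∈ S <;> simp [h, (z2ne (x i) (x i + 1)).mpr rfl]
  · intro z hz
    funext i
    by_cases h : x i = z i <;> simp [h]
    exact ((z2ne _ _).mp h).symm
  · intro S hS
    ext i
    by_cases h : i ∈ S <;> simp [h, (z2ne (x i) (x i + 1)).mpr rfl]

def delta (i : Fin N) : B N := fun j => if j = i then 1 else 0

lemma norm_one_eq {y : B N} (h : hammingNorm y = 1) : ∃ i, y = delta i := by
  rw [hammingNorm, Finset.card_eq_one] at h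
  obtain ⟨i, hi⟩ := h
  refine ⟨i, funext fun j => ?_⟩
  have hj := Finset.ext_iff.mp hi j
  simp only [Finset.mem_filter, Finset.mem_univ, true_and, Finset.mem_singleton] at hj
  unfold delta
  by_cases h' : j = i
  · subst h'
    have h2 : y j ≠ 0 := hj.mpr rfl
    simp [(z2ne1 _).mp h2]
  · simp only [h', if_false]
    by_contra hne
    exact h' (hj.mp hne)

lemma norm_delta (i : Fin N) : hammingNorm (delta i) = 1 := by
  rw [hammingNorm]
  convert Finset.card_singleton i using 2
  ext j
  by_cases h : j = i <;> simp [delta, h]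

lemma delta_inj {i i' : Fin N} (h : delta i = delta i') : i = i' := by
  by_contra hne
  have h2 := congrFun h i
  simp [delta, hne] at h2

lemma dist_delta_mem (i : Fin N) (u : B N) (hi : u i ≠ 0) :
    hammingDist (delta i) u + 1 = hammingNorm u := by
  have h : ({j | delta i j ≠ u j} : Finset (Fin N))
      = ({j | u j ≠ 0} : Finset (Fin N)).erase i := by
    ext j
    by_cases h' : j = i
    · subst h'
      simp only [Finset.mem_filter, Finset.mem_univ, true_and]
      simp [delta, (z2ne1 _).mp hi]
    · simp [delta, h', (show ¬ i = j from fun hh => h' hh.symm), eq_comm]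
  rw [hammingDist, h, Finset.card_erase_of_mem (by simpa using hi), hammingNorm]
  have : 0 < ({j | u j ≠ 0} : Finset (Fin N)).card := Finset.card_pos.mpr ⟨i, by simpa using hi⟩
  omega

lemma dist_delta_not_mem (i : Fin N) (u : B N) (hi : u i = 0) :
    hammingDist (delta i) u = hammingNorm u + 1 := by
  have h : ({j | delta i j ≠ u j} : Finset (Fin N))
      = insert i ({j | u j ≠ 0} : Finset (Fin N)) := by
    ext j
    by_cases h' : j = i
    · subst h'
      simp only [Finset.mem_filter, Finset.mem_univ, true_and]
      simp [delta, hi]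
    · simp [delta, h', (show ¬ i = j from fun hh => h' hh.symm), eq_comm]
  rw [hammingDist, h, Finset.card_insert_of_notMem (by simpa using hi), hammingNorm]

lemma count_step (u : B N) :
    ({v : B N | hammingNorm v = 1 ∧ hammingDist v u + 1 = hammingNorm u} : Finset (B N)).card
      = hammingNorm u := by
  have : hammingNorm u = ({i | u i ≠ 0} : Finset (Fin N)).card := rfl
  conv_rhs => rw [this]
  refine (Finset.card_bij (fun i _ => delta i) ?_ ?_ ?_).symm
  · intro i hi
    simp only [Finset.mem_filter, Finset.mem_univ, true_and] at hi ⊢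
    exact ⟨norm_delta i, dist_delta_mem i u hi⟩
  · intro i hi i' hi' h
    exact delta_inj h
  · intro v hv
    simp only [Finset.mem_filter, Finset.mem_univ, true_and] at hv
    obtain ⟨i, rfl⟩ := norm_one_eq hv.1
    refine ⟨i, ?_, rfl⟩
    simp only [Finset.mem_filter, Finset.mem_univ, true_and]
    intro hi0
    have := dist_delta_not_mem i u hi0
    omega

lemma card_translate (t : B N) (P : B N → Prop) [DecidablePred P] :
    ({y : B N | P y} : Finset (B N)).card = ({v : B N | P (t + v)} : Finset (B N)).card := by
  refine (Finset.card_bij (fun v _ => t + v) ?_ ?_ ?_).symm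
  · intro v hv
    simpa using (Finset.mem_filter.mp hv).2
  · intro v _ v' _ h
    exact add_left_cancel h
  · intro y hy
    exact ⟨y - t, by simpa using (Finset.mem_filter.mp hy).2, by ring⟩

lemma pair_count {x z : B N} {e : ℕ} (hxz : hammingDist x z = e) :
    ({y : B N | hammingDist x y = 1 ∧ hammingDist y z + 1 = e} : Finset (B N)).card = e := by
  rw [card_translate x]
  have h1 : ∀ v : B N, hammingDist x (x + v) = hammingNorm v := by
    intro v
    rw [hammingDist_eq_hammingNorm]
    congr 1
    funext i
    show -x i + (x i + v i) = v i
    have : ∀ a b : ZMod 2, -a + (a + b) = b := by decide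
    exact this _ _
  have h2 : ∀ v : B N, hammingDist (x + v) z = hammingDist v (z - x) := by
    intro v
    rw [hammingDist_eq_hammingNorm, hammingDist_eq_hammingNorm]
    congr 1
    funext i
    show -(x i + v i) + z i = -v i + (z i - x i)
    ring
  have h3 : hammingNorm (z - x) = e := by
    rw [sub_eq_neg_add, ← hammingDist_eq_hammingNorm]
    exact hxz
  calc ({v : B N | hammingDist x (x + v) = 1 ∧ hammingDist (x + v) z + 1 = e} : Finset (B N)).card
      = ({v : B N | hammingNorm v = 1 ∧ hammingDist v (z - x) + 1 = hammingNorm (z - x)} : Finset (B N)).card := by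
        apply Finset.card_bij (fun v _ => v) <;> intros <;>
          simp_all [Finset.mem_filter, h1, h2, h3]
    _ = e := by rw [count_step, h3]

lemma dc (A B' : Finset (B N)) :
    ∑ y ∈ A, (B'.filter fun z => hammingDist y z = 1).card
      = ∑ z ∈ B', (A.filter fun y => hammingDist y z = 1).card := by
  simp only [Finset.card_filter]
  rw [Finset.sum_comm]

set_option maxHeartbeats 2000000 in
lemma key (n M : ℕ) (hn13 : 13 ≤ n) (hodd : n % 2 = 1)
    (hmod3 : ((n : ℕ) : ZMod 3) - ((n.choose 2 : ℕ) : ZMod 3) = 1)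
    (hcount : 2 ^ (n - 1) = M * n + 3 * M)
    (C : Finset (B n)) (hcard : C.card = M)
    (heven : ∀ c ∈ C, Even (hammingNorm c))
    (hdist : ∀ c ∈ C, ∀ c' ∈ C, c ≠ c' → 4 ≤ hammingDist c c')
    (D E F : Finset (B n))
    (hcover : D ∪ E ∪ F = Finset.univ.filter fun x : B n =>
      Odd (hammingNorm x) ∧ ∀ c ∈ C, 3 ≤ hammingDist x c)
    (hD : ∀ c ∈ D, ∀ c' ∈ D, c ≠ c' → 4 ≤ hammingDist c c')
    (hE : ∀ c ∈ E, ∀ c' ∈ E, c ≠ c' → 4 ≤ hammingDist c c')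
    (hF : ∀ c ∈ F, ∀ c' ∈ F, c ≠ c' → 4 ≤ hammingDist c c') :
    D.card = M := by
  have hM1 : 1 ≤ M := by
    rcases Nat.eq_zero_or_pos M with h | h
    · rw [h] at hcount
      simp at hcount
    · exact h
  set V := (Finset.univ.filter fun x : B n =>
      Odd (hammingNorm x) ∧ ∀ c ∈ C, 3 ≤ hammingDist x c) with hVdef
  have hVmem : ∀ z : B n, z ∈ V ↔
      (Odd (hammingNorm z) ∧ ∀ c ∈ C, 3 ≤ hammingDist z c) := by
    intro z; rw [hVdef, Finset.mem_filter]; simp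
  have closeP : ∀ (P : Finset (B n)),
      (∀ c ∈ P, ∀ c' ∈ P, c ≠ c' → 4 ≤ hammingDist c c') →
      ∀ c ∈ P, ∀ c' ∈ P, hammingDist c c' ≤ 3 → c = c' := by
    intro P hP c hc c' hc' hle
    by_contra hne
    exact absurd (hP c hc c' hc' hne) (by omega)
  have closeC := closeP C hdist
  -- parity helpers
  have parOE : ∀ z : B n, Odd (hammingNorm z) → ∀ c ∈ C, Odd (hammingDist z c) := by
    intro z hz c hc
    rw [odd_cast, par, (odd_cast _).mp hz, (even_cast _).mp (heven c hc), add_zero]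
  have parNbr : ∀ z y : B n, Odd (hammingNorm z) → hammingDist y z = 1 →
      Even (hammingNorm y) := by
    intro z y hz h1
    have hp := par y z
    rw [h1, (odd_cast _).mp hz, Nat.cast_one] at hp
    rw [even_cast]
    have : ∀ a : ZMod 2, (1 : ZMod 2) = a + 1 → a = 0 := by decide
    exact this _ hp
  have parNbrOdd : ∀ y z : B n, Even (hammingNorm y) → hammingDist y z = 1 →
      Odd (hammingNorm z) := by
    intro y z hy h1
    have hp := par y z
    rw [h1, (even_cast _).mp hy, Nat.cast_one, zero_add] at hp
    rw [odd_cast]; exact hp.symm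
  have parEE : ∀ y c : B n, Even (hammingNorm y) → c ∈ C → Even (hammingDist y c) := by
    intro y c hy hc
    rw [even_cast, par, (even_cast _).mp hy, (even_cast _).mp (heven c hc), add_zero]
  have parOO : ∀ z z' : B n, Odd (hammingNorm z) → Odd (hammingNorm z') →
      Even (hammingDist z z') := by
    intro z z' hz hz'
    rw [even_cast, par, (odd_cast _).mp hz, (odd_cast _).mp hz']
    decide
  -- spheres with the other orientation
  have sphere' : ∀ (w : B n) (k : ℕ),
      (univ.filter fun y : B n => hammingDist y w = k).card = n.choose k := by
    intro w k
    have h := sphere_card w k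
    rw [← h]
    congr 1
    apply Finset.filter_congr
    intro y _
    rw [hammingDist_comm]
  have sphere1' : ∀ w : B n, (univ.filter fun y : B n => hammingDist y w = 1).card = n := by
    intro w; rw [sphere' w 1, Nat.choose_one_right]
  -- cardinality of odd- and even-weight words
  have hcardfun : Fintype.card (B n) = 2 ^ n := by
    rw [Fintype.card_fun]; simp
  set Ods := univ.filter (fun x : B n => Odd (hammingNorm x)) with hOdef
  set Evs := univ.filter (fun x : B n => Even (hammingNorm x)) with hEdef
  have hOE : Evs.card = Ods.card := by
    have i0 : Fin n := ⟨0, by omega⟩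
    have hds : ∑ j, delta (N := n) i0 j = (1 : ZMod 2) := by
      rw [Finset.sum_eq_single i0]
      · simp [delta]
      · intro j _ hj; simp [delta, hj]
      · intro h; exact absurd (Finset.mem_univ i0) h
    have hepsadd : ∀ x : B n, ((hammingNorm (x + delta i0) : ℕ) : ZMod 2)
        = ((hammingNorm x : ℕ) : ZMod 2) + 1 := by
      intro x
      rw [eps_cast, eps_cast, ← hds, ← Finset.sum_add_distrib]
      rfl
    apply Finset.card_bij (fun x _ => x + delta i0)
    · intro x hx
      rw [hEdef, Finset.mem_filter] at hx
      rw [hOdef, Finset.mem_filter]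
      refine ⟨Finset.mem_univ _, ?_⟩
      rw [odd_cast, hepsadd, (even_cast _).mp hx.2, zero_add]
    · intro x _ x' _ h
      exact add_right_cancel h
    · intro y hy
      rw [hOdef, Finset.mem_filter] at hy
      have hyy : y + delta i0 + delta i0 = y := by
        funext j
        have : ∀ a b : ZMod 2, a + b + b = a := by decide
        exact this _ _
      refine ⟨y + delta i0, ?_, hyy⟩
      rw [hEdef, Finset.mem_filter]
      refine ⟨Finset.mem_univ _, ?_⟩
      rw [even_cast, hepsadd, (odd_cast _).mp hy.2]
      decide
  have h2n : 2 ^ n = 2 * 2 ^ (n - 1) := by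
    rw [← pow_succ']
    congr 1
    omega
  have hsplitOE : Evs.card + Ods.card = 2 ^ n := by
    rw [← hcardfun, ← Finset.card_univ]
    have h := Finset.card_filter_add_card_filter_not (s := (univ : Finset (B n)))
      (p := fun x => Even (hammingNorm x))
    rw [← h, hEdef, hOdef]
    congr 2
    apply Finset.filter_congr
    intro x _
    rw [Nat.not_even_iff_odd]
  have hOcard : Ods.card = M * n + 3 * M := by omega
  have hEcard : Evs.card = M * n + 3 * M := by omega
  -- |V| = 3M
  have hVsub : V = Ods.filter (fun x => ∀ c ∈ C, 3 ≤ hammingDist x c) := by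
    rw [hVdef, hOdef, Finset.filter_filter]
  have hbadO : Ods.filter (fun x => ¬ ∀ c ∈ C, 3 ≤ hammingDist x c)
      = C.biUnion (fun c => univ.filter fun z : B n => hammingDist z c = 1) := by
    ext z
    simp only [Finset.mem_filter, Finset.mem_biUnion, Finset.mem_univ, true_and, hOdef]
    constructor
    · rintro ⟨hzo, hno⟩
      push_neg at hno
      obtain ⟨c, hc, hlt⟩ := hno
      have hoddd := parOE z hzo c hc
      rw [Nat.odd_iff] at hoddd
      exact ⟨c, hc, by omega⟩
    · rintro ⟨c, hc, h1⟩
      refine ⟨parNbrOdd c z (heven c hc) (by rw [hammingDist_comm]; exact h1), ?_⟩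
      push_neg
      exact ⟨c, hc, by omega⟩
  have hdisjC : ∀ c1 ∈ C, ∀ c2 ∈ C, c1 ≠ c2 →
      Disjoint (univ.filter fun z : B n => hammingDist z c1 = 1)
        (univ.filter fun z : B n => hammingDist z c2 = 1) := by
    intro c1 hc1 c2 hc2 hne
    rw [Finset.disjoint_left]
    intro z hz1 hz2
    simp only [Finset.mem_filter, Finset.mem_univ, true_and] at hz1 hz2
    apply hne
    apply closeC c1 hc1 c2 hc2
    have ht := hammingDist_triangle c1 z c2
    rw [hammingDist_comm c1 z] at ht
    omega
  have hVcard : V.card = 3 * M := by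
    have hsplit := Finset.card_filter_add_card_filter_not (s := Ods)
      (p := fun x => ∀ c ∈ C, 3 ≤ hammingDist x c)
    rw [← hVsub, hbadO, Finset.card_biUnion hdisjC] at hsplit
    have hsum : ∑ c ∈ C, (univ.filter fun z : B n => hammingDist z c = 1).card = M * n := by
      rw [Finset.sum_congr rfl (fun c _ => sphere1' c), Finset.sum_const, hcard, smul_eq_mul]
    omega
  -- the degree function s
  set s : B n → ℕ := fun y => (V.filter fun z => hammingDist y z = 1).card with hsdef
  have hUD : ∀ y : B n, V.filter (fun z => hammingDist y z = 1)
      = (D.filter fun z => hammingDist y z = 1) ∪ (E.filter fun z => hammingDist y z = 1)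
        ∪ (F.filter fun z => hammingDist y z = 1) := by
    intro y
    rw [← hcover, Finset.filter_union, Finset.filter_union]
  have hPle : ∀ (y : B n) (P : Finset (B n)),
      (∀ c ∈ P, ∀ c' ∈ P, c ≠ c' → 4 ≤ hammingDist c c') →
      (P.filter fun z => hammingDist y z = 1).card ≤ 1 := by
    intro y P hP
    rw [Finset.card_le_one]
    intro z1 hz1 z2 hz2
    simp only [Finset.mem_filter] at hz1 hz2
    apply closeP P hP z1 hz1.1 z2 hz2.1
    have ht := hammingDist_triangle z1 y z2
    rw [hammingDist_comm z1 y] at ht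
    omega
  have hsle : ∀ y : B n, s y ≤ 3 := by
    intro y
    have h1 := Finset.card_union_le (D.filter fun z => hammingDist y z = 1)
      (E.filter fun z => hammingDist y z = 1)
    have h2 := Finset.card_union_le
      ((D.filter fun z => hammingDist y z = 1) ∪ (E.filter fun z => hammingDist y z = 1))
      (F.filter fun z => hammingDist y z = 1)
    have hD1 := hPle y D hD
    have hE1 := hPle y E hE
    have hF1 := hPle y F hF
    have : s y = ((D.filter fun z => hammingDist y z = 1)
        ∪ (E.filter fun z => hammingDist y z = 1)
        ∪ (F.filter fun z => hammingDist y z = 1)).card :=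
      congrArg Finset.card (hUD y)
    omega
  have hdeg3 : ∀ y : B n, s y = 3 → (D.filter fun z => hammingDist y z = 1).card = 1 := by
    intro y h3
    have h1 := Finset.card_union_le (D.filter fun z => hammingDist y z = 1)
      (E.filter fun z => hammingDist y z = 1)
    have h2 := Finset.card_union_le
      ((D.filter fun z => hammingDist y z = 1) ∪ (E.filter fun z => hammingDist y z = 1))
      (F.filter fun z => hammingDist y z = 1)
    have hD1 := hPle y D hD
    have hE1 := hPle y E hE
    have hF1 := hPle y F hF
    have hs3 : s y = ((D.filter fun z => hammingDist y z = 1)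
        ∪ (E.filter fun z => hammingDist y z = 1)
        ∪ (F.filter fun z => hammingDist y z = 1)).card :=
      congrArg Finset.card (hUD y)
    omega
  have nbrV : ∀ z ∈ V, ∀ y : B n, hammingDist y z = 1 →
      Even (hammingNorm y) ∧ y ∉ C := by
    intro z hz y h1
    obtain ⟨hzo, hzc⟩ := (hVmem z).mp hz
    refine ⟨parNbr z y hzo h1, ?_⟩
    intro hyC
    have h3 := hzc y hyC
    rw [hammingDist_comm] at h3
    omega
  have hs13 : ∀ y : B n, Even (hammingNorm y) → y ∉ C → s y = 1 ∨ s y = 3 := by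
    intro y hy hyC
    have hVfilter : V.filter (fun z => hammingDist y z = 1)
        = (univ.filter fun z : B n => hammingDist y z = 1).filter
            (fun z => Odd (hammingNorm z) ∧ ∀ c ∈ C, 3 ≤ hammingDist z c) := by
      rw [hVdef, Finset.filter_filter, Finset.filter_filter]
      apply Finset.filter_congr
      intro z _
      tauto
    have hbad : (univ.filter fun z : B n => hammingDist y z = 1).filter
        (fun z => ¬ (Odd (hammingNorm z) ∧ ∀ c ∈ C, 3 ≤ hammingDist z c))
        = (C.filter fun c => hammingDist y c = 2).biUnion
            (fun c => univ.filter fun z : B n =>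
              hammingDist y z = 1 ∧ hammingDist z c + 1 = 2) := by
      ext z
      simp only [Finset.mem_filter, Finset.mem_biUnion, Finset.mem_univ, true_and]
      constructor
      · rintro ⟨h1, hno⟩
        have hzo : Odd (hammingNorm z) := parNbrOdd y z hy h1
        have hno2 : ¬ ∀ c ∈ C, 3 ≤ hammingDist z c := fun hall => hno ⟨hzo, hall⟩
        push_neg at hno2
        obtain ⟨c, hc, hlt⟩ := hno2
        have hodd1 := parOE z hzo c hc
        rw [Nat.odd_iff] at hodd1
        have hzc1 : hammingDist z c = 1 := by omega
        refine ⟨c, ⟨hc, ?_⟩, h1, by omega⟩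
        have heee := parEE y c hy hc
        have ht := hammingDist_triangle y z c
        have hne0 : hammingDist y c ≠ 0 := by
          intro h0
          exact hyC (by rwa [hammingDist_eq_zero.mp h0])
        rw [Nat.even_iff] at heee
        omega
      · rintro ⟨c, ⟨hc, hyc2⟩, h1, hz1⟩
        refine ⟨h1, ?_⟩
        rintro ⟨hzo, hall⟩
        have := hall c hc
        omega
    have hdisj2 : ∀ c1 ∈ (C.filter fun c => hammingDist y c = 2),
        ∀ c2 ∈ (C.filter fun c => hammingDist y c = 2), c1 ≠ c2 →
        Disjoint (univ.filter fun z : B n => hammingDist y z = 1 ∧ hammingDist z c1 + 1 = 2)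
          (univ.filter fun z : B n => hammingDist y z = 1 ∧ hammingDist z c2 + 1 = 2) := by
      intro c1 hc1 c2 hc2 hne
      rw [Finset.disjoint_left]
      intro z h1 h2
      simp only [Finset.mem_filter, Finset.mem_univ, true_and] at h1 h2
      rw [Finset.mem_filter] at hc1 hc2
      apply hne
      apply closeC c1 hc1.1 c2 hc2.1
      have ht := hammingDist_triangle c1 z c2
      rw [hammingDist_comm c1 z] at ht
      omega
    have hsplit := Finset.card_filter_add_card_filter_not
      (s := (univ.filter fun z : B n => hammingDist y z = 1))
      (p := fun z => Odd (hammingNorm z) ∧ ∀ c ∈ C, 3 ≤ hammingDist z c)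
    rw [← hVfilter, hbad, Finset.card_biUnion hdisj2] at hsplit
    have hsum2 : ∑ c ∈ (C.filter fun c => hammingDist y c = 2),
        (univ.filter fun z : B n =>
          hammingDist y z = 1 ∧ hammingDist z c + 1 = 2).card
        = 2 * (C.filter fun c => hammingDist y c = 2).card := by
      rw [Finset.sum_congr rfl (fun c hc => pair_count (Finset.mem_filter.mp hc).2),
        Finset.sum_const, smul_eq_mul, Nat.mul_comm]
    have hnn : (univ.filter fun z : B n => hammingDist y z = 1).card = n := by
      rw [sphere_card y 1, Nat.choose_one_right]
    rw [hsum2, hnn] at hsplit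
    have hsy : s y = (V.filter fun z => hammingDist y z = 1).card := rfl
    have h3 := hsle y
    omega
  -- even non-codewords and their classification
  set EvC := univ.filter (fun y : B n => Even (hammingNorm y) ∧ y ∉ C) with hEvCdef
  have hEvCcard : EvC.card + M = M * n + 3 * M := by
    have h1 : Evs.filter (fun y => y ∈ C) = C := by
      ext y
      simp only [Finset.mem_filter, hEdef, Finset.mem_univ, true_and]
      exact ⟨fun h => h.2, fun h => ⟨heven y h, h⟩⟩
    have h2 := Finset.card_filter_add_card_filter_not (s := Evs) (p := fun y => y ∈ C)
    have h3 : Evs.filter (fun y => ¬ y ∈ C) = EvC := by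
      rw [hEvCdef, hEdef, Finset.filter_filter]
    rw [h1, h3] at h2
    omega
  set A1 := EvC.filter (fun y => s y = 1) with hA1def
  set A3 := EvC.filter (fun y => ¬ s y = 1) with hA3def
  have hA3s : ∀ y ∈ A3, s y = 3 := by
    intro y hy
    rw [hA3def, Finset.mem_filter] at hy
    obtain ⟨hyE, hs1⟩ := hy
    rw [hEvCdef, Finset.mem_filter] at hyE
    rcases hs13 y hyE.2.1 hyE.2.2 with h | h
    · exact absurd h hs1
    · exact h
  have hA1s : ∀ y ∈ A1, s y = 1 := by
    intro y hy
    exact (Finset.mem_filter.mp hy).2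
  have hA13card : A1.card + A3.card = EvC.card := by
    have h := Finset.card_filter_add_card_filter_not (s := EvC) (p := fun y => s y = 1)
    rw [← hA1def, ← hA3def] at h
    exact h
  have hnbrEvC : ∀ z ∈ V, (EvC.filter fun y => hammingDist y z = 1)
      = univ.filter (fun y : B n => hammingDist y z = 1) := by
    intro z hz
    ext y
    simp only [hEvCdef, Finset.mem_filter, Finset.mem_univ, true_and]
    exact ⟨fun h => h.2, fun h1 => ⟨nbrV z hz y h1, h1⟩⟩
  have hsum1 : ∑ y ∈ A1, s y = A1.card := by
    rw [Finset.sum_congr rfl hA1s, Finset.sum_const, smul_eq_mul, Nat.mul_one]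
  have hsum3 : ∑ y ∈ A3, s y = 3 * A3.card := by
    rw [Finset.sum_congr rfl hA3s, Finset.sum_const, smul_eq_mul, Nat.mul_comm]
  have hsplitsum : ∑ y ∈ EvC, s y = ∑ y ∈ A1, s y + ∑ y ∈ A3, s y := by
    have h := Finset.sum_filter_add_sum_filter_not EvC (fun y => s y = 1) s
    rw [← hA1def, ← hA3def] at h
    exact h.symm
  have hglob : A1.card + 3 * A3.card = (3 * M) * n := by
    have hdc := dc (N := n) EvC V
    have hR : ∑ z ∈ V, (EvC.filter fun y => hammingDist y z = 1).card = (3 * M) * n := by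
      rw [Finset.sum_congr rfl (fun z hz => by rw [hnbrEvC z hz, sphere1' z])]
      rw [Finset.sum_const, smul_eq_mul, hVcard]
    calc A1.card + 3 * A3.card = ∑ y ∈ EvC, s y := by rw [hsplitsum, hsum1, hsum3]
      _ = ∑ z ∈ V, (EvC.filter fun y => hammingDist y z = 1).card := hdc
      _ = (3 * M) * n := hR
  have hMn : M ≤ M * n := Nat.le_mul_of_pos_right M (by omega)
  have h3Mn : (3 * M) * n = 3 * (M * n) := by ring
  have hA3card : A3.card = M * n - M := by omega
  have hA1card : A1.card = 3 * M := by omega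
  -- extra parity helper
  have parOddOfEven : ∀ x y : B n, Odd (hammingNorm x) → Even (hammingDist x y) →
      Odd (hammingNorm y) := by
    intro x y hx hd
    rw [odd_cast]
    have hp := par x y
    rw [(even_cast _).mp hd, (odd_cast _).mp hx] at hp
    have : ∀ a : ZMod 2, (0 : ZMod 2) = 1 + a → a = 1 := by decide
    exact this _ hp
  -- r1 + r3 = n
  have hr13 : ∀ z ∈ V, (A1.filter fun y => hammingDist y z = 1).card
      + (A3.filter fun y => hammingDist y z = 1).card = n := by
    intro z hz
    have h := Finset.card_filter_add_card_filter_not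
      (s := EvC.filter fun y => hammingDist y z = 1) (p := fun y => s y = 1)
    have e1 : (EvC.filter fun y => hammingDist y z = 1).filter (fun y => s y = 1)
        = A1.filter (fun y => hammingDist y z = 1) := by
      ext y
      simp only [hA1def, hEvCdef, Finset.mem_filter, Finset.mem_univ, true_and]
      tauto
    have e3 : (EvC.filter fun y => hammingDist y z = 1).filter (fun y => ¬ s y = 1)
        = A3.filter (fun y => hammingDist y z = 1) := by
      ext y
      simp only [hA3def, hEvCdef, Finset.mem_filter, Finset.mem_univ, true_and]
      tauto
    rw [e1, e3, hnbrEvC z hz, sphere1' z] at h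
    exact h
  -- r1 + 3 r3 = n + 2 w
  have hrw : ∀ z ∈ V, (A1.filter fun y => hammingDist y z = 1).card
      + 3 * (A3.filter fun y => hammingDist y z = 1).card
      = n + 2 * (V.filter fun z' => hammingDist z z' = 2).card := by
    intro z hz
    set NZ := univ.filter (fun y : B n => hammingDist y z = 1) with hNZdef
    have hLsplit : ∑ y ∈ NZ, s y = (A1.filter fun y => hammingDist y z = 1).card
        + 3 * (A3.filter fun y => hammingDist y z = 1).card := by
      have h := Finset.sum_filter_add_sum_filter_not NZ (fun y => s y = 1) s
      have e1 : NZ.filter (fun y => s y = 1) = A1.filter (fun y => hammingDist y z = 1) := by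
        ext y
        simp only [hNZdef, hA1def, hEvCdef, Finset.mem_filter, Finset.mem_univ, true_and]
        constructor
        · rintro ⟨h1, h2⟩
          exact ⟨⟨nbrV z hz y h1, h2⟩, h1⟩
        · rintro ⟨⟨-, h2⟩, h1⟩
          exact ⟨h1, h2⟩
      have e3 : NZ.filter (fun y => ¬ s y = 1) = A3.filter (fun y => hammingDist y z = 1) := by
        ext y
        simp only [hNZdef, hA3def, hEvCdef, Finset.mem_filter, Finset.mem_univ, true_and]
        constructor
        · rintro ⟨h1, h2⟩
          exact ⟨⟨nbrV z hz y h1, h2⟩, h1⟩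
        · rintro ⟨⟨-, h2⟩, h1⟩
          exact ⟨h1, h2⟩
      rw [e1, e3] at h
      have f1 : ∑ y ∈ A1.filter (fun y => hammingDist y z = 1), s y
          = (A1.filter fun y => hammingDist y z = 1).card := by
        rw [Finset.sum_congr rfl (fun y hy => hA1s y (Finset.mem_filter.mp hy).1),
          Finset.sum_const, smul_eq_mul, Nat.mul_one]
      have f3 : ∑ y ∈ A3.filter (fun y => hammingDist y z = 1), s y
          = 3 * (A3.filter fun y => hammingDist y z = 1).card := by
        rw [Finset.sum_congr rfl (fun y hy => hA3s y (Finset.mem_filter.mp hy).1),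
          Finset.sum_const, smul_eq_mul, Nat.mul_comm]
      rw [f1, f3] at h
      exact h.symm
    have hterm : ∀ z' ∈ V, (NZ.filter fun y => hammingDist y z' = 1).card
        = if z' = z then n else (if hammingDist z z' = 2 then 2 else 0) := by
      intro z' hz'
      by_cases hzz : z' = z
      · rw [if_pos hzz, hzz]
        have e : NZ.filter (fun y => hammingDist y z = 1) = NZ :=
          Finset.filter_true_of_mem (fun y hy => (Finset.mem_filter.mp hy).2)
        rw [e, hNZdef]
        exact sphere1' z
      · rw [if_neg hzz]
        by_cases h2 : hammingDist z z' = 2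
        · rw [if_pos h2]
          have hpc := pair_count (x := z) (z := z') (e := 2) h2
          have e : NZ.filter (fun y => hammingDist y z' = 1)
              = univ.filter (fun y : B n => hammingDist z y = 1 ∧ hammingDist y z' + 1 = 2) := by
            rw [hNZdef, Finset.filter_filter]
            apply Finset.filter_congr
            intro y _
            constructor
            · rintro ⟨a, b⟩
              exact ⟨by rw [hammingDist_comm]; exact a, by omega⟩
            · rintro ⟨a, b⟩
              exact ⟨by rw [hammingDist_comm]; exact a, by omega⟩
          rw [e]
          exact hpc
        · rw [if_neg h2, Finset.card_eq_zero, Finset.filter_eq_empty_iff]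
          intro y hy
          rw [hNZdef, Finset.mem_filter] at hy
          intro h1
          have ht := hammingDist_triangle z y z'
          rw [hammingDist_comm z y] at ht
          have hne0 : hammingDist z z' ≠ 0 := fun h0 => hzz (hammingDist_eq_zero.mp h0).symm
          have hev : Even (hammingDist z z') :=
            parOO z z' ((hVmem z).mp hz).1 ((hVmem z').mp hz').1
          rw [Nat.even_iff] at hev
          omega
    have hsumif : ∑ z' ∈ V, (NZ.filter fun y => hammingDist y z' = 1).card
        = n + 2 * (V.filter fun z' => hammingDist z z' = 2).card := by
      rw [Finset.sum_congr rfl hterm]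
      rw [← Finset.add_sum_erase V _ hz]
      rw [if_pos rfl]
      congr 1
      have hcongr : ∀ z' ∈ V.erase z,
          (if z' = z then n else if hammingDist z z' = 2 then 2 else 0)
          = (if hammingDist z z' = 2 then 2 else 0) := by
        intro z' hz'
        rw [if_neg (Finset.ne_of_mem_erase hz')]
      rw [Finset.sum_congr rfl hcongr]
      rw [Finset.sum_ite, Finset.sum_const, Finset.sum_const_zero, add_zero, smul_eq_mul]
      have e : (V.erase z).filter (fun z' => hammingDist z z' = 2)
          = V.filter (fun z' => hammingDist z z' = 2) := by
        ext z'
        simp only [Finset.mem_filter, Finset.mem_erase]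
        constructor
        · rintro ⟨⟨-, a⟩, b⟩
          exact ⟨a, b⟩
        · rintro ⟨a, b⟩
          refine ⟨⟨?_, a⟩, b⟩
          intro h
          rw [h, hammingDist_self] at b
          omega
      rw [e, Nat.mul_comm]
    calc (A1.filter fun y => hammingDist y z = 1).card
        + 3 * (A3.filter fun y => hammingDist y z = 1).card
        = ∑ y ∈ NZ, s y := hLsplit.symm
      _ = ∑ z' ∈ V, (NZ.filter fun y => hammingDist y z' = 1).card := dc NZ V
      _ = n + 2 * (V.filter fun z' => hammingDist z z' = 2).card := hsumif
  -- w + 3 N3 = choose 2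
  have hw3 : ∀ z ∈ V, (V.filter fun z' => hammingDist z z' = 2).card
      + 3 * (C.filter fun c => hammingDist c z = 3).card = n.choose 2 := by
    intro z hz
    have hsplit := Finset.card_filter_add_card_filter_not
      (s := univ.filter fun z' : B n => hammingDist z z' = 2)
      (p := fun z' => Odd (hammingNorm z') ∧ ∀ c ∈ C, 3 ≤ hammingDist z' c)
    have e1 : (univ.filter fun z' : B n => hammingDist z z' = 2).filter
        (fun z' => Odd (hammingNorm z') ∧ ∀ c ∈ C, 3 ≤ hammingDist z' c)
        = V.filter (fun z' => hammingDist z z' = 2) := by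
      rw [hVdef, Finset.filter_filter, Finset.filter_filter]
      apply Finset.filter_congr
      intro z' _
      tauto
    have e2 : (univ.filter fun z' : B n => hammingDist z z' = 2).filter
        (fun z' => ¬ (Odd (hammingNorm z') ∧ ∀ c ∈ C, 3 ≤ hammingDist z' c))
        = (C.filter fun c => hammingDist c z = 3).biUnion
            (fun c => univ.filter fun z' : B n =>
              hammingDist c z' = 1 ∧ hammingDist z' z + 1 = 3) := by
      ext z'
      simp only [Finset.mem_filter, Finset.mem_biUnion, Finset.mem_univ, true_and]
      constructor
      · rintro ⟨h2, hno⟩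
        have hz'o : Odd (hammingNorm z') := by
          apply parOddOfEven z z' ((hVmem z).mp hz).1
          rw [h2]
          decide
        have hno2 : ¬ ∀ c ∈ C, 3 ≤ hammingDist z' c := fun hall => hno ⟨hz'o, hall⟩
        push_neg at hno2
        obtain ⟨c, hc, hlt⟩ := hno2
        have hodd1 := parOE z' hz'o c hc
        rw [Nat.odd_iff] at hodd1
        have hz'c : hammingDist z' c = 1 := by omega
        have hcz3 : hammingDist c z = 3 := by
          have ht := hammingDist_triangle z z' c
          have hzc := ((hVmem z).mp hz).2 c hc
          rw [hammingDist_comm c z]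
          omega
        refine ⟨c, ⟨hc, hcz3⟩, ?_, ?_⟩
        · rw [hammingDist_comm]
          exact hz'c
        · rw [hammingDist_comm] at h2
          omega
      · rintro ⟨c, hcmem, h1, hz1⟩
        constructor
        · rw [hammingDist_comm]
          omega
        · rintro ⟨-, hall⟩
          have := hall c hcmem.1
          rw [hammingDist_comm] at h1
          omega
    have hdisj3 : ∀ c1 ∈ (C.filter fun c => hammingDist c z = 3),
        ∀ c2 ∈ (C.filter fun c => hammingDist c z = 3), c1 ≠ c2 →
        Disjoint (univ.filter fun z' : B n => hammingDist c1 z' = 1 ∧ hammingDist z' z + 1 = 3)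
          (univ.filter fun z' : B n => hammingDist c2 z' = 1 ∧ hammingDist z' z + 1 = 3) := by
      intro c1 hc1 c2 hc2 hne
      rw [Finset.disjoint_left]
      intro z' h1 h2
      simp only [Finset.mem_filter, Finset.mem_univ, true_and] at h1 h2
      rw [Finset.mem_filter] at hc1 hc2
      apply hne
      apply closeC c1 hc1.1 c2 hc2.1
      have ht := hammingDist_triangle c1 z' c2
      rw [hammingDist_comm c2 z'] at h2
      omega
    rw [e1, e2, Finset.card_biUnion hdisj3] at hsplit
    have hsum3' : ∑ c ∈ (C.filter fun c => hammingDist c z = 3),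
        (univ.filter fun z' : B n =>
          hammingDist c z' = 1 ∧ hammingDist z' z + 1 = 3).card
        = 3 * (C.filter fun c => hammingDist c z = 3).card := by
      rw [Finset.sum_congr rfl (fun c hc => pair_count (Finset.mem_filter.mp hc).2),
        Finset.sum_const, smul_eq_mul, Nat.mul_comm]
    rw [hsum3', sphere_card z 2] at hsplit
    exact hsplit
  -- r1 ≥ 1 on V
  have hr1pos : ∀ z ∈ V, 1 ≤ (A1.filter fun y => hammingDist y z = 1).card := by
    intro z hz
    by_contra h0
    have e1 := hr13 z hz
    have e2 := hrw z hz
    have e3 := hw3 z hz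
    have hkey : n + 3 * (C.filter fun c => hammingDist c z = 3).card = n.choose 2 := by omega
    have hc3 : ((n + 3 * (C.filter fun c => hammingDist c z = 3).card : ℕ) : ZMod 3)
        = ((n.choose 2 : ℕ) : ZMod 3) := by rw [hkey]
    push_cast at hc3
    have h30 : (3 : ZMod 3) = 0 := by decide
    have : (1 : ZMod 3) = 0 := by
      calc (1 : ZMod 3) = (n : ZMod 3) - ((n.choose 2 : ℕ) : ZMod 3) := hmod3.symm
        _ = (n : ZMod 3) - ((n : ZMod 3)
            + 3 * ((C.filter fun c => hammingDist c z = 3).card : ZMod 3)) := by rw [hc3]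
        _ = -(3 * ((C.filter fun c => hammingDist c z = 3).card : ZMod 3)) := by ring
        _ = 0 := by rw [h30]; ring
    exact one_ne_zero this
  -- r1 = 1 on V
  have hr1one : ∀ z ∈ V, (A1.filter fun y => hammingDist y z = 1).card = 1 := by
    have hL : ∑ y ∈ A1, (V.filter fun z => hammingDist y z = 1).card = 3 * M := by
      rw [Finset.sum_congr rfl (fun y hy => hA1s y hy), Finset.sum_const, smul_eq_mul,
        Nat.mul_one, hA1card]
    have hG := dc (N := n) A1 V
    rw [hL] at hG
    have hcV : ∑ z ∈ V, (1 : ℕ) = 3 * M := by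
      rw [Finset.sum_const, smul_eq_mul, Nat.mul_one, hVcard]
    have hle : ∀ z ∈ V, (fun _ => (1 : ℕ)) z
        ≤ (fun z => (A1.filter fun y => hammingDist y z = 1).card) z :=
      fun z hz => hr1pos z hz
    have hiff := (Finset.sum_eq_sum_iff_of_le hle).mp (by rw [hcV, hG])
    intro z hz
    exact (hiff z hz).symm
  -- final double count
  have hDV : D ⊆ V := by
    intro x hx
    rw [← hcover]
    exact Finset.mem_union_left _ (Finset.mem_union_left _ hx)
  have hDside : ∀ z ∈ D, (EvC.filter fun y => hammingDist y z = 1).card = n := by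
    intro z hz
    rw [hnbrEvC z (hDV hz), sphere1' z]
  have hmain : ∑ y ∈ EvC, (D.filter fun z => hammingDist y z = 1).card = D.card * n := by
    rw [dc EvC D, Finset.sum_congr rfl hDside, Finset.sum_const, smul_eq_mul]
  have hsplitD : ∑ y ∈ EvC, (D.filter fun z => hammingDist y z = 1).card
      = ∑ y ∈ A1, (D.filter fun z => hammingDist y z = 1).card
        + ∑ y ∈ A3, (D.filter fun z => hammingDist y z = 1).card := by
    have h := Finset.sum_filter_add_sum_filter_not EvC (fun y => s y = 1)
      (fun y => (D.filter fun z => hammingDist y z = 1).card)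
    rw [← hA1def, ← hA3def] at h
    exact h.symm
  have hA3part : ∑ y ∈ A3, (D.filter fun z => hammingDist y z = 1).card = A3.card := by
    rw [Finset.sum_congr rfl (fun y hy => hdeg3 y (hA3s y hy)), Finset.sum_const,
      smul_eq_mul, Nat.mul_one]
  have hA1part : ∑ y ∈ A1, (D.filter fun z => hammingDist y z = 1).card = D.card := by
    rw [dc A1 D, Finset.sum_congr rfl (fun z hz => hr1one z (hDV hz)), Finset.sum_const,
      smul_eq_mul, Nat.mul_one]
  have hfinal : D.card * n = D.card + (M * n - M) := by
    rw [← hmain, hsplitD, hA1part, hA3part, hA3card]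
  have hn' : n - 1 + 1 = n := by omega
  have e1 : D.card * (n - 1) + D.card * 1 = D.card * n := by
    rw [← Nat.mul_add, hn']
  have e2 : M * (n - 1) + M * 1 = M * n := by
    rw [← Nat.mul_add, hn']
  have hcancel : D.card * (n - 1) = M * (n - 1) := by
    have h := hfinal
    have h3 := hMn
    clear * - h e1 e2 h3
    omega
  have hn1 : 0 < n - 1 := by omega
  exact Nat.eq_of_mul_eq_mul_right hn1 hcancel

end S18

theorem stmt18 (m : ℕ) (hm : 4 ≤ m)
    (C : Finset (Fin (2 ^ m - 3) → ZMod 2))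
    (hcard : C.card = 2 ^ (2 ^ m - m - 4))
    (heven : ∀ c ∈ C, Even (hammingNorm c))
    (hdist : ∀ c ∈ C, ∀ c' ∈ C, c ≠ c' → 4 ≤ hammingDist c c')
    (D E F : Finset (Fin (2 ^ m - 3) → ZMod 2))
    (hcover : D ∪ E ∪ F = Finset.univ.filter fun x : Fin (2 ^ m - 3) → ZMod 2 =>
      Odd (hammingNorm x) ∧ ∀ c ∈ C, 3 ≤ hammingDist x c)
    (hDE : Disjoint D E) (hDF : Disjoint D F) (hEF : Disjoint E F)
    (hD : ∀ c ∈ D, ∀ c' ∈ D, c ≠ c' → 4 ≤ hammingDist c c')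
    (hE : ∀ c ∈ E, ∀ c' ∈ E, c ≠ c' → 4 ≤ hammingDist c c')
    (hF : ∀ c ∈ F, ∀ c' ∈ F, c ≠ c' → 4 ≤ hammingDist c c') :
    D.card = 2 ^ (2 ^ m - m - 4) ∧ E.card = 2 ^ (2 ^ m - m - 4) ∧
      F.card = 2 ^ (2 ^ m - m - 4) := by
  have h2m2 : 2 ^ m = 2 * 2 ^ (m - 1) := by
    rw [← pow_succ']
    congr 1
    omega
  have hm2 : m + 4 ≤ 2 ^ m := by
    have h1 : m - 1 < 2 ^ (m - 1) := Nat.lt_two_pow_self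
    omega
  have hn13 : 13 ≤ 2 ^ m - 3 := by
    have h16 : (16 : ℕ) ≤ 2 ^ m := by
      calc (16 : ℕ) = 2 ^ 4 := by norm_num
        _ ≤ 2 ^ m := Nat.pow_le_pow_right (by norm_num) hm
    omega
  have hodd : (2 ^ m - 3) % 2 = 1 := by omega
  have h1n : 1 ≤ 2 ^ m - 3 := by omega
  have h32m : 3 ≤ 2 ^ m := by omega
  -- mod 3 fact
  have h2C : 2 * ((2 ^ m - 3).choose 2) = (2 ^ m - 3) * ((2 ^ m - 3) - 1) := by
    rw [Nat.choose_two_right]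
    apply Nat.mul_div_cancel'
    have hev : Even ((2 ^ m - 3) * ((2 ^ m - 3) - 1)) := by
      apply Even.mul_left
      rw [Nat.even_iff]
      omega
    exact even_iff_two_dvd.mp hev
  have hn3 : (((2 ^ m - 3 : ℕ)) : ZMod 3) = (-1 : ZMod 3) ^ m := by
    rw [Nat.cast_sub h32m]
    push_cast
    rw [show ((3 : ZMod 3)) = 0 from by decide, sub_zero,
      show ((2 : ZMod 3)) = -1 from by decide]
  have hch : (((2 ^ m - 3).choose 2 : ℕ) : ZMod 3)
      = 2 * ((-1 : ZMod 3) ^ m * ((-1 : ZMod 3) ^ m - 1)) := by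
    have hc := congrArg (Nat.cast : ℕ → ZMod 3) h2C
    rw [Nat.cast_mul, Nat.cast_mul, Nat.cast_sub h1n, Nat.cast_one, Nat.cast_ofNat, hn3] at hc
    have h4 : (4 : ZMod 3) = 1 := by decide
    calc (((2 ^ m - 3).choose 2 : ℕ) : ZMod 3)
        = 1 * (((2 ^ m - 3).choose 2 : ℕ) : ZMod 3) := (one_mul _).symm
      _ = 4 * (((2 ^ m - 3).choose 2 : ℕ) : ZMod 3) := by rw [h4]
      _ = 2 * (2 * (((2 ^ m - 3).choose 2 : ℕ) : ZMod 3)) := by ring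
      _ = 2 * ((-1 : ZMod 3) ^ m * ((-1 : ZMod 3) ^ m - 1)) := by rw [hc]
  have hmod3 : (((2 ^ m - 3 : ℕ)) : ZMod 3) - (((2 ^ m - 3).choose 2 : ℕ) : ZMod 3) = 1 := by
    rcases Nat.even_or_odd m with he | ho
    · rw [hn3, hch, he.neg_one_pow]
      decide
    · rw [hn3, hch, ho.neg_one_pow]
      decide
  -- the count
  have hcount : 2 ^ ((2 ^ m - 3) - 1)
      = 2 ^ (2 ^ m - m - 4) * (2 ^ m - 3) + 3 * 2 ^ (2 ^ m - m - 4) := by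
    have e : 2 ^ (2 ^ m - m - 4) * (2 ^ m - 3) + 3 * 2 ^ (2 ^ m - m - 4)
        = 2 ^ (2 ^ m - m - 4) * ((2 ^ m - 3) + 3) := by ring
    rw [e, show (2 ^ m - 3) + 3 = 2 ^ m from by omega, ← pow_add]
    congr 1
    omega
  refine ⟨?_, ?_, ?_⟩
  · exact S18.key _ _ hn13 hodd hmod3 hcount C hcard heven hdist D E F hcover hD hE hF
  · refine S18.key _ _ hn13 hodd hmod3 hcount C hcard heven hdist E D F ?_ hE hD hF
    rw [Finset.union_comm E D]
    exact hcover
  · refine S18.key _ _ hn13 hodd hmod3 hcount C hcard heven hdist F D E ?_ hF hD hE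
    have hre : F ∪ D ∪ E = D ∪ E ∪ F := by
      rw [Finset.union_comm F D, Finset.union_assoc, Finset.union_comm F E,
        ← Finset.union_assoc]
    rw [hre]
    exact hcover
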